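/- Let Σ_r ∈ Matrix (Fin d₁) (Fin d₁) ℝ, Σ_c ∈ Matrix (Fin d₂) (Fin d₂) ℝ be symmetric positive definite, X₁, …, X_n ∈ Matrix (Fin d₁) (Fin d₂) ℝ with mean X̄, labels Ỹ₁, …, Ỹ_n ∈ {−1, 1}, λ > 0, and fix u ∈ ℝ^{d₁} with u ≠ 0. Suppose (v*, t*) minimizes over (v, t) ∈ ℝ^{d₂} × ℝ the function (uᵀΣ_r u)(vᵀΣ_c v) + (λ/n)·Σᵢ (1 − Ỹᵢ(uᵀ(Xᵢ − X̄)v − t))₊. Then there exist β₁, …, β_n ∈ ℝ with 0 ≤ βᵢ ≤ λ/n for all i and Σᵢ βᵢỸᵢ = 0, such that v* = (1/2)·Σᵢ (βᵢỸᵢ)·Σ_c⁻¹(Xᵢ − X̄)ᵀu / (uᵀΣ_r u), and (β₁, …, β_n) minimizes the dual objective −Σᵢ βᵢ + (1/4)·Σᵢ Σⱼ βᵢβⱼỸᵢỸⱼ·((Xᵢ − X̄)ᵀu)ᵀΣ_c⁻¹((Xⱼ − X̄)ᵀu)/(uᵀΣ_r u) over all β satisfying these constraints. -/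

import Mathlib

set_option maxHeartbeats 1000000


open Matrix

noncomputable section

/-- The bilinear form `uᵀ M v = Σ_{i,j} uᵢ M_{ij} vⱼ`. -/
def bilin {d₁ d₂ : ℕ} (u : Fin d₁ → ℝ) (M : Matrix (Fin d₁) (Fin d₂) ℝ) (v : Fin d₂ → ℝ) : ℝ :=
  ∑ i, ∑ j, u i * M i j * v j

/-- Sample mean of data matrices. -/
def sampleMean {n d₁ d₂ : ℕ} (X : Fin n → Matrix (Fin d₁) (Fin d₂) ℝ) :
    Matrix (Fin d₁) (Fin d₂) ℝ :=
  (n : ℝ)⁻¹ • ∑ i, X i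

/-- The dual objective of the `v`-update quadratic program:
`D(β) = −Σᵢ βᵢ + (1/4) Σᵢ Σⱼ βᵢβⱼỸᵢỸⱼ ((Xᵢ−X̄)ᵀu)ᵀΣ_c⁻¹((Xⱼ−X̄)ᵀu) / (uᵀΣ_r u)`. -/
def dualObjV {n d₁ d₂ : ℕ} (Sr : Matrix (Fin d₁) (Fin d₁) ℝ)
    (Sc : Matrix (Fin d₂) (Fin d₂) ℝ) (X : Fin n → Matrix (Fin d₁) (Fin d₂) ℝ)
    (Ytil : Fin n → ℝ) (u : Fin d₁ → ℝ) (β : Fin n → ℝ) : ℝ :=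
  -∑ i, β i + (1 / 4) * ∑ i, ∑ j, β i * β j * Ytil i * Ytil j *
    (((X i - sampleMean X)ᵀ.mulVec u) ⬝ᵥ (Sc⁻¹.mulVec ((X j - sampleMean X)ᵀ.mulVec u)))
      / bilin u Sr u



lemma sum_smul_dot {n d₂ : ℕ} (g : Fin n → ℝ) (m : Fin n → Fin d₂ → ℝ) (v : Fin d₂ → ℝ) :
    (∑ i, g i • m i) ⬝ᵥ v = ∑ i, g i * (m i ⬝ᵥ v) := by
  simp only [dotProduct, Finset.sum_apply, Pi.smul_apply, smul_eq_mul, Finset.sum_mul,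
    Finset.mul_sum, mul_assoc]
  exact Finset.sum_comm

lemma mulVec_sum_smul {n d d₂ : ℕ} (A : Matrix (Fin d) (Fin d₂) ℝ) (g : Fin n → ℝ)
    (m : Fin n → Fin d₂ → ℝ) :
    A.mulVec (∑ i, g i • m i) = ∑ i, g i • A.mulVec (m i) := by
  rw [show A.mulVec (∑ i, g i • m i) = A.mulVecLin (∑ i, g i • m i) from rfl, map_sum]
  simp [mulVecLin_apply, mulVec_smul]

lemma posdef_symm_eq {d₂ : ℕ} {Sc : Matrix (Fin d₂) (Fin d₂) ℝ} (hSc : Sc.PosDef) :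
    Scᵀ = Sc := by
  have h := hSc.isHermitian.eq; rwa [conjTranspose_eq_transpose_of_trivial] at h

lemma dot_mulVec_symm {d₂ : ℕ} {Sc : Matrix (Fin d₂) (Fin d₂) ℝ} (hSc : Scᵀ = Sc)
    (x y : Fin d₂ → ℝ) : x ⬝ᵥ Sc.mulVec y = y ⬝ᵥ Sc.mulVec x := by
  rw [dotProduct_mulVec, dotProduct_comm, ← mulVec_transpose, hSc]

lemma key_quad {d₂ : ℕ} {Sc : Matrix (Fin d₂) (Fin d₂) ℝ} (hSc : Sc.PosDef) {Q : ℝ}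
    (hQ : 0 < Q) (v w : Fin d₂ → ℝ) :
    -((4 * Q)⁻¹ * (w ⬝ᵥ Sc⁻¹.mulVec w)) ≤ Q * (v ⬝ᵥ Sc.mulVec v) - w ⬝ᵥ v := by
  have hsym := posdef_symm_eq hSc
  set a := Sc⁻¹.mulVec w with ha
  have hSa : Sc.mulVec a = w := by
    rw [ha, mulVec_mulVec, mul_nonsing_inv _ (isUnit_iff_ne_zero.2 hSc.det_pos.ne'), one_mulVec]
  set z := v - (2 * Q)⁻¹ • a with hz
  have h0 : 0 ≤ z ⬝ᵥ Sc.mulVec z := by simpa using hSc.posSemidef.dotProduct_mulVec_nonneg z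
  have h2 : a ⬝ᵥ Sc.mulVec v = w ⬝ᵥ v := by
    rw [dot_mulVec_symm hsym, hSa, dotProduct_comm]
  have h3 : v ⬝ᵥ Sc.mulVec a = w ⬝ᵥ v := by rw [hSa, dotProduct_comm]
  have h4 : a ⬝ᵥ Sc.mulVec a = w ⬝ᵥ a := by rw [hSa, dotProduct_comm]
  have hexp : z ⬝ᵥ Sc.mulVec z
      = v ⬝ᵥ Sc.mulVec v - (2*Q)⁻¹ * (w ⬝ᵥ v) - (2*Q)⁻¹ * (w ⬝ᵥ v)
        + (2*Q)⁻¹ * ((2*Q)⁻¹ * (w ⬝ᵥ a)) := by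
    simp only [hz, mulVec_sub, mulVec_smul, sub_dotProduct, dotProduct_sub, smul_dotProduct,
      dotProduct_smul, h2, h3, h4, smul_eq_mul]
    ring
  have hQ4 : (0:ℝ) < 4 * Q := by linarith
  have := mul_nonneg hQ.le h0
  rw [hexp] at this
  have hwa : w ⬝ᵥ Sc⁻¹.mulVec w = w ⬝ᵥ a := rfl
  rw [hwa]
  have e1 : Q * ((2*Q)⁻¹ * ((2*Q)⁻¹ * (w ⬝ᵥ a))) = (4*Q)⁻¹ * (w ⬝ᵥ a) := by
    field_simp; ring
  have e2 : Q * ((2*Q)⁻¹ * (w ⬝ᵥ v)) = (w ⬝ᵥ v)/2 := by field_simp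
  nlinarith [this]
open Matrix
noncomputable section

lemma kkt_exists {n d₂ : ℕ} (hn : 0 < n) {Sc : Matrix (Fin d₂) (Fin d₂) ℝ} (hSc : Sc.PosDef)
    {Q c : ℝ} (hQ : 0 < Q) (hc : 0 < c)
    (m : Fin n → Fin d₂ → ℝ) (Y : Fin n → ℝ) (vstar : Fin d₂ → ℝ) (tstar : ℝ)
    (f : Fin n → ℝ) (hf : ∀ i, f i = 1 - Y i * (m i ⬝ᵥ vstar - tstar))
    (hmin : ∀ (v : Fin d₂ → ℝ) (t : ℝ),
      Q * (vstar ⬝ᵥ Sc.mulVec vstar) + c * ∑ i, max (f i) 0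
        ≤ Q * (v ⬝ᵥ Sc.mulVec v) + c * ∑ i, max (1 - Y i * (m i ⬝ᵥ v - t)) 0) :
    ∃ β : Fin n → ℝ, (∀ i, 0 ≤ β i ∧ β i ≤ c) ∧ (∀ i, 0 < f i → β i = c) ∧
      (∀ i, f i < 0 → β i = 0) ∧ (∑ i, β i * Y i = 0) ∧
      (∑ i, (β i * Y i) • m i = (2 * Q) • Sc.mulVec vstar) := by
  classical
  have hsym : Scᵀ = Sc := by
    have h := hSc.isHermitian.eq; rwa [conjTranspose_eq_transpose_of_trivial] at h
  set l : Fin n → ℝ := fun i => if 0 < f i then c else 0 with hl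
  set r : Fin n → ℝ := fun i => if f i < 0 then 0 else c with hr
  have hlr : ∀ i, l i ≤ r i := by
    intro i
    simp only [hl, hr]
    split_ifs with h1 h2 <;> linarith
  have hl0 : ∀ i, 0 ≤ l i := by intro i; simp only [hl]; split_ifs <;> linarith
  have hrc : ∀ i, r i ≤ c := by intro i; simp only [hr]; split_ifs <;> linarith
  -- the linear map
  set T : (Fin n → ℝ) →ₗ[ℝ] ((Fin d₂ → ℝ) × ℝ) :=
    { toFun := fun β => (∑ i, (β i * Y i) • m i, ∑ i, β i * Y i)
      map_add' := by
        intro x y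
        simp [add_mul, add_smul, Finset.sum_add_distrib, Prod.ext_iff]
      map_smul' := by
        intro a x
        simp only [Finset.smul_sum, Prod.smul_mk, smul_eq_mul, RingHom.id_apply, Prod.ext_iff,
          Pi.smul_apply, Finset.mul_sum]
        constructor
        · exact Finset.sum_congr rfl fun i _ => by simp [smul_smul, mul_assoc]
        · exact Finset.sum_congr rfl fun i _ => by ring } with hT
  set box : Set (Fin n → ℝ) := Set.univ.pi (fun i => Set.Icc (l i) (r i)) with hbox
  have hboxconv : Convex ℝ box := convex_pi (fun i _ => convex_Icc _ _)
  have hboxcpt : IsCompact box := isCompact_univ_pi (fun i => isCompact_Icc)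
  set K : Set ((Fin d₂ → ℝ) × ℝ) := (⇑T) '' box with hK
  have hKconv : Convex ℝ K := hboxconv.linear_image T
  have hTcont : Continuous (⇑T) := T.continuous_of_finiteDimensional
  have hKclosed : IsClosed K := (hboxcpt.image hTcont).isClosed
  set p : (Fin d₂ → ℝ) × ℝ := ((2 * Q) • Sc.mulVec vstar, (0:ℝ)) with hp
  have hpK : p ∈ K := by
    by_contra hpK
    obtain ⟨φ, c₀, hc₁, hc₂⟩ := geometric_hahn_banach_point_closed hKconv hKclosed hpK
    set w : Fin d₂ → ℝ := fun j => φ ((Pi.single j 1 : Fin d₂ → ℝ), (0:ℝ)) with hw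
    set s : ℝ := φ ((0 : Fin d₂ → ℝ), (1:ℝ)) with hs
    have hsingle : ∀ z : Fin d₂ → ℝ, ∑ j, z j • (Pi.single j 1 : Fin d₂ → ℝ) = z := by
      intro z
      have h : ∀ j, z j • (Pi.single j 1 : Fin d₂ → ℝ) = Pi.single j (z j) := by
        intro j; funext k; by_cases h : j = k <;> simp [Pi.single_apply, h]
      simp_rw [h]; exact Finset.univ_sum_single z
    have hφ : ∀ (z : Fin d₂ → ℝ) (a : ℝ), φ (z, a) = z ⬝ᵥ w + a * s := by
      intro z a
      have hdecomp : ((z, a) : (Fin d₂ → ℝ) × ℝ)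
          = (∑ j, z j • ((Pi.single j 1 : Fin d₂ → ℝ), (0:ℝ))) + a • ((0:Fin d₂ → ℝ), (1:ℝ)) := by
        refine Prod.ext ?_ ?_
        · simp [Prod.fst_sum, hsingle z]
        · simp [Prod.snd_sum]
      rw [hdecomp, map_add, map_sum]
      simp only [_root_.map_smul, smul_eq_mul]
      simp [dotProduct, hw, hs]
    set ψ : Fin n → ℝ := fun i => Y i * (m i ⬝ᵥ w + s) with hψ
    have hTφ : ∀ β : Fin n → ℝ, φ (T β) = ∑ i, β i * ψ i := by
      intro β
      have hTβ : T β = ((∑ i, (β i * Y i) • m i, ∑ i, β i * Y i) : (Fin d₂ → ℝ) × ℝ) := rfl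
      rw [hTβ, hφ, sum_smul_dot, Finset.sum_mul, ← Finset.sum_add_distrib]
      exact Finset.sum_congr rfl fun i _ => by simp only [hψ]; ring
    set β₀ : Fin n → ℝ := fun i => if ψ i < 0 then r i else l i with hβ₀
    have hβ₀box : β₀ ∈ box := by
      intro i _
      simp only [hβ₀, Set.mem_Icc]
      split_ifs
      exacts [⟨hlr i, le_refl _⟩, ⟨le_refl _, hlr i⟩]
    have hc₂' : c₀ < ∑ i, β₀ i * ψ i := by
      have h := hc₂ (T β₀) ⟨β₀, hβ₀box, rfl⟩
      rwa [hTφ] at h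
    have hφp : φ p = 2 * Q * (Sc.mulVec vstar ⬝ᵥ w) := by
      rw [hp, hφ, smul_dotProduct]
      simp only [smul_eq_mul, zero_mul, add_zero]
    haveI hne : Nonempty (Fin n) := ⟨⟨0, hn⟩⟩
    set g : Fin n → ℝ := fun i => if f i = 0 then 1 else |f i| / (1 + |ψ i|) with hg
    have hgpos : ∀ i, 0 < g i := by
      intro i; simp only [hg]; split_ifs with h
      · norm_num
      · exact div_pos (abs_pos.2 h) (by positivity)
    set ε₀ : ℝ := Finset.univ.inf' Finset.univ_nonempty g with hε₀
    have hε₀pos : 0 < ε₀ := by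
      rw [hε₀, Finset.lt_inf'_iff]; exact fun i _ => hgpos i
    have hε₀le : ∀ i, ε₀ ≤ g i := fun i => Finset.inf'_le _ (Finset.mem_univ i)
    have hkey : ∀ ε : ℝ, 0 < ε → ε ≤ ε₀ →
        ∑ i, β₀ i * ψ i ≤ 2 * Q * (Sc.mulVec vstar ⬝ᵥ w) + ε * (Q * (w ⬝ᵥ Sc.mulVec w)) := by
      intro ε hε hεle
      have hbound : ∀ i, f i ≠ 0 → ε * (1 + |ψ i|) ≤ |f i| := by
        intro i h
        have h1 : ε ≤ |f i| / (1 + |ψ i|) := by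
          have := hε₀le i
          rw [hg] at this
          simp only [if_neg h] at this
          linarith
        have h2 : (0:ℝ) < 1 + |ψ i| := by positivity
        calc ε * (1 + |ψ i|) ≤ (|f i| / (1 + |ψ i|)) * (1 + |ψ i|) :=
              mul_le_mul_of_nonneg_right h1 h2.le
          _ = |f i| := div_mul_cancel₀ _ h2.ne'
      have hhinge : ∀ i, c * max (f i - ε * ψ i) 0 = c * max (f i) 0 - ε * (β₀ i * ψ i) := by
        intro i
        rcases lt_trichotomy (f i) 0 with hfi | hfi | hfi
        · have hri : r i = 0 := by simp [hr, hfi]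
          have hli : l i = 0 := by simp [hl, asymm hfi]
          have hβ0 : β₀ i = 0 := by simp only [hβ₀, hri, hli, ite_self]
          have hb := hbound i hfi.ne
          have h2 : max (f i - ε * ψ i) 0 = 0 := by
            apply max_eq_right
            have := neg_abs_le (ψ i)
            have := abs_of_neg hfi
            nlinarith
          rw [max_eq_right hfi.le, h2, hβ0]; ring
        · have hli : l i = 0 := by simp [hl, hfi]
          have hri : r i = c := by simp [hr, hfi]
          by_cases hψi : ψ i < 0
          · have hβ0 : β₀ i = c := by simp only [hβ₀, if_pos hψi, hri]
            have h2 : max (f i - ε * ψ i) 0 = f i - ε * ψ i := by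
              apply max_eq_left; rw [hfi]; nlinarith
            rw [h2, hβ0, hfi]; simp; ring
          · have hβ0 : β₀ i = 0 := by simp only [hβ₀, if_neg hψi, hli]
            have h2 : max (f i - ε * ψ i) 0 = 0 := by
              apply max_eq_right; rw [hfi]
              have := not_lt.1 hψi
              nlinarith
            rw [h2, hβ0, hfi]; simp
        · have hli : l i = c := by simp [hl, hfi]
          have hri : r i = c := by simp [hr, not_lt.2 hfi.le]
          have hβ0 : β₀ i = c := by simp only [hβ₀, hli, hri, ite_self]
          have hb := hbound i hfi.ne'
          have h2 : max (f i - ε * ψ i) 0 = f i - ε * ψ i := by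
            apply max_eq_left
            have := le_abs_self (ψ i)
            have := abs_of_pos hfi
            nlinarith
          rw [max_eq_left hfi.le, h2, hβ0]; ring
      have hmin' := hmin (vstar + ε • w) (tstar - ε * s)
      have harg : ∀ i, 1 - Y i * (m i ⬝ᵥ (vstar + ε • w) - (tstar - ε * s)) = f i - ε * ψ i := by
        intro i
        rw [hf i]
        simp only [hψ, dotProduct_add, dotProduct_smul, smul_eq_mul]
        ring
      have hsymm' : vstar ⬝ᵥ Sc.mulVec w = w ⬝ᵥ Sc.mulVec vstar := dot_mulVec_symm hsym _ _
      have hcomm : Sc.mulVec vstar ⬝ᵥ w = w ⬝ᵥ Sc.mulVec vstar := dotProduct_comm _ _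
      have hquad : (vstar + ε • w) ⬝ᵥ Sc.mulVec (vstar + ε • w)
          = vstar ⬝ᵥ Sc.mulVec vstar + 2 * ε * (Sc.mulVec vstar ⬝ᵥ w)
            + ε ^ 2 * (w ⬝ᵥ Sc.mulVec w) := by
        simp only [mulVec_add, mulVec_smul, add_dotProduct, dotProduct_add, dotProduct_smul,
          smul_dotProduct, smul_eq_mul]
        rw [hsymm', hcomm]
        ring
      simp_rw [harg] at hmin'
      have hsum : c * ∑ i, max (f i - ε * ψ i) 0
          = c * ∑ i, max (f i) 0 - ε * ∑ i, β₀ i * ψ i := by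
        calc c * ∑ i, max (f i - ε * ψ i) 0
            = ∑ i, (c * max (f i) 0 - ε * (β₀ i * ψ i)) := by
              rw [Finset.mul_sum]; exact Finset.sum_congr rfl fun i _ => hhinge i
          _ = c * ∑ i, max (f i) 0 - ε * ∑ i, β₀ i * ψ i := by
              rw [Finset.sum_sub_distrib, Finset.mul_sum, Finset.mul_sum]
      rw [hquad, hsum] at hmin'
      have h5 : ε * (∑ i, β₀ i * ψ i)
          ≤ ε * (2 * Q * (Sc.mulVec vstar ⬝ᵥ w) + ε * (Q * (w ⬝ᵥ Sc.mulVec w))) := by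
        nlinarith [hmin']
      exact le_of_mul_le_mul_left h5 hε
    have hlim : ∑ i, β₀ i * ψ i ≤ 2 * Q * (Sc.mulVec vstar ⬝ᵥ w) := by
      by_contra hcon
      push_neg at hcon
      set A := 2 * Q * (Sc.mulVec vstar ⬝ᵥ w) with hA
      set B := Q * (w ⬝ᵥ Sc.mulVec w) with hB
      set C := ∑ i, β₀ i * ψ i with hC
      set ε := min ε₀ ((C - A) / (|B| + 1)) with hε
      have hab : (0:ℝ) < |B| + 1 := by positivity
      have hεpos : 0 < ε := lt_min hε₀pos (div_pos (by linarith) hab)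
      have h := hkey ε hεpos (min_le_left _ _)
      have h2 : ε * B ≤ ε * |B| := mul_le_mul_of_nonneg_left (le_abs_self B) hεpos.le
      have h3 : ε ≤ (C - A) / (|B| + 1) := min_le_right _ _
      have h4 : ε * (|B| + 1) ≤ C - A := by
        rw [← div_mul_cancel₀ (C - A) hab.ne']
        exact mul_le_mul_of_nonneg_right h3 hab.le
      nlinarith
    rw [hφp] at hc₁
    linarith
  obtain ⟨β, hβbox, hβT⟩ := hpK
  rw [hT] at hβT
  simp only [LinearMap.coe_mk, AddHom.coe_mk, hp, Prod.mk.injEq] at hβT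
  refine ⟨β, ?_, ?_, ?_, hβT.2, hβT.1⟩
  · intro i
    have := hβbox i (Set.mem_univ i)
    exact ⟨le_trans (hl0 i) this.1, le_trans this.2 (hrc i)⟩
  · intro i hfi
    have hb := hβbox i (Set.mem_univ i)
    have h1 : l i = c := by simp [hl, hfi]
    have h2 : r i = c := by simp [hr, not_lt.2 hfi.le]
    simp only [Set.mem_Icc, h1, h2] at hb
    linarith [hb.1, hb.2]
  · intro i hfi
    have hb := hβbox i (Set.mem_univ i)
    have h1 : l i = 0 := by simp [hl, asymm hfi]
    have h2 : r i = 0 := by simp [hr, hfi]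
    simp only [Set.mem_Icc, h1, h2] at hb
    linarith [hb.1, hb.2]

lemma dot_sum_smul {n d₂ : ℕ} (x : Fin d₂ → ℝ) (g : Fin n → ℝ) (y : Fin n → Fin d₂ → ℝ) :
    x ⬝ᵥ (∑ j, g j • y j) = ∑ j, g j * (x ⬝ᵥ y j) := by
  simp only [dotProduct, Finset.sum_apply, Pi.smul_apply, smul_eq_mul, Finset.mul_sum]
  rw [Finset.sum_comm]
  exact Finset.sum_congr rfl fun j _ => Finset.sum_congr rfl fun k _ => by ring

lemma bilin_eq_dot {d₁ d₂ : ℕ} (u : Fin d₁ → ℝ) (M : Matrix (Fin d₁) (Fin d₂) ℝ)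
    (v : Fin d₂ → ℝ) : bilin u M v = u ⬝ᵥ M.mulVec v := by
  simp [bilin, dotProduct, mulVec, Finset.mul_sum, mul_assoc]

lemma bilin_eq_dot' {d₁ d₂ : ℕ} (u : Fin d₁ → ℝ) (M : Matrix (Fin d₁) (Fin d₂) ℝ)
    (v : Fin d₂ → ℝ) : bilin u M v = (Mᵀ.mulVec u) ⬝ᵥ v := by
  rw [bilin_eq_dot, dotProduct_mulVec, ← vecMul_transpose, transpose_transpose]


/-- **Theorem 2, part 2 (dual characterization of the `v`-update).** If `(v*, t*)` minimizes
the PSMM objective in `(v, t)` for fixed `u ≠ 0`, then there is a dual-feasible `β` with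
`v* = (1/2) Σᵢ (βᵢỸᵢ) Σ_c⁻¹(Xᵢ−X̄)ᵀu / (uᵀΣ_r u)` minimizing the dual objective. -/
theorem stmt_12 {n d₁ d₂ : ℕ} (hn : 0 < n)
    (Sr : Matrix (Fin d₁) (Fin d₁) ℝ) (Sc : Matrix (Fin d₂) (Fin d₂) ℝ)
    (hSr : Sr.PosDef) (hSc : Sc.PosDef)
    (X : Fin n → Matrix (Fin d₁) (Fin d₂) ℝ)
    (Ytil : Fin n → ℝ) (hYtil : ∀ i, Ytil i = -1 ∨ Ytil i = 1)
    (lam : ℝ) (hlam : 0 < lam)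
    (u : Fin d₁ → ℝ) (hu : u ≠ 0)
    (vstar : Fin d₂ → ℝ) (tstar : ℝ)
    (hmin : ∀ (v : Fin d₂ → ℝ) (t : ℝ),
      bilin u Sr u * bilin vstar Sc vstar
          + lam / n * ∑ i, max (1 - Ytil i * (bilin u (X i - sampleMean X) vstar - tstar)) 0
        ≤ bilin u Sr u * bilin v Sc v
          + lam / n * ∑ i, max (1 - Ytil i * (bilin u (X i - sampleMean X) v - t)) 0) :
    ∃ β : Fin n → ℝ,
      (∀ i, 0 ≤ β i ∧ β i ≤ lam / n) ∧
      (∑ i, β i * Ytil i = 0) ∧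
      vstar = (2 * bilin u Sr u)⁻¹ •
        ∑ i, (β i * Ytil i) • (Sc⁻¹.mulVec ((X i - sampleMean X)ᵀ.mulVec u)) ∧
      (∀ γ : Fin n → ℝ, (∀ i, 0 ≤ γ i ∧ γ i ≤ lam / n) → (∑ i, γ i * Ytil i = 0) →
        dualObjV Sr Sc X Ytil u β ≤ dualObjV Sr Sc X Ytil u γ) := by
  classical
  have hQ0 : 0 < bilin u Sr u := by rw [bilin_eq_dot]; simpa using hSr.dotProduct_mulVec_pos hu
  set Q := bilin u Sr u with hQdef
  have hQ : 0 < Q := hQ0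
  set m : Fin n → Fin d₂ → ℝ := fun i => (X i - sampleMean X)ᵀ.mulVec u with hm
  have hmb : ∀ (i : Fin n) (v : Fin d₂ → ℝ), bilin u (X i - sampleMean X) v = m i ⬝ᵥ v :=
    fun i v => bilin_eq_dot' u _ v
  set f : Fin n → ℝ := fun i => 1 - Ytil i * (m i ⬝ᵥ vstar - tstar) with hfdef
  have hc : 0 < lam / n := div_pos hlam (by exact_mod_cast hn)
  have hmin' : ∀ (v : Fin d₂ → ℝ) (t : ℝ),
      Q * (vstar ⬝ᵥ Sc.mulVec vstar) + (lam / n) * ∑ i, max (f i) 0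
        ≤ Q * (v ⬝ᵥ Sc.mulVec v) + (lam / n) * ∑ i, max (1 - Ytil i * (m i ⬝ᵥ v - t)) 0 := by
    intro v t
    have h := hmin v t
    have h1 : bilin vstar Sc vstar = vstar ⬝ᵥ Sc.mulVec vstar := bilin_eq_dot _ _ _
    have h2 : bilin v Sc v = v ⬝ᵥ Sc.mulVec v := bilin_eq_dot _ _ _
    simp only [hmb, h1, h2] at h
    exact h
  obtain ⟨β, hβ01, hβpos, hβneg, hβY, hβstat⟩ :=
    kkt_exists hn hSc hQ hc m Ytil vstar tstar f (fun i => rfl) hmin'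
  have hdet : IsUnit Sc.det := isUnit_iff_ne_zero.2 hSc.det_pos.ne'
  have hinv : ∀ x : Fin d₂ → ℝ, Sc⁻¹.mulVec (Sc.mulVec x) = x := by
    intro x; rw [mulVec_mulVec, nonsing_inv_mul _ hdet, one_mulVec]
  have hQ2 : (2 * Q) ≠ 0 := by positivity
  have hrep : vstar = (2 * Q)⁻¹ • ∑ i, (β i * Ytil i) • (Sc⁻¹.mulVec (m i)) := by
    have h := congrArg (fun z => Sc⁻¹.mulVec z) hβstat
    rw [mulVec_sum_smul, mulVec_smul, hinv] at h
    rw [h, smul_smul, inv_mul_cancel₀ hQ2, one_smul]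
  have hmrw : ∀ i : Fin n, (X i - sampleMean X)ᵀ.mulVec u = m i := fun _ => rfl
  have hD : ∀ γ : Fin n → ℝ, dualObjV Sr Sc X Ytil u γ
      = -∑ i, γ i + (4 * Q)⁻¹ *
        ((∑ i, (γ i * Ytil i) • m i) ⬝ᵥ Sc⁻¹.mulVec (∑ i, (γ i * Ytil i) • m i)) := by
    intro γ
    have hw : (∑ i, (γ i * Ytil i) • m i) ⬝ᵥ Sc⁻¹.mulVec (∑ i, (γ i * Ytil i) • m i)
        = ∑ i, ∑ j, γ i * γ j * Ytil i * Ytil j * (m i ⬝ᵥ Sc⁻¹.mulVec (m j)) := by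
      rw [sum_smul_dot, mulVec_sum_smul]
      refine Finset.sum_congr rfl fun i _ => ?_
      rw [dot_sum_smul, Finset.mul_sum]
      exact Finset.sum_congr rfl fun j _ => by ring
    unfold dualObjV
    simp only [hmrw, ← hQdef]
    simp only [← Finset.sum_div]
    rw [← hw]
    set S := (∑ i, (γ i * Ytil i) • m i) ⬝ᵥ Sc⁻¹.mulVec (∑ i, (γ i * Ytil i) • m i) with hS
    have : 1 / 4 * (S / Q) = (4 * Q)⁻¹ * S := by field_simp
    rw [this]
  have hsumf : ∀ γ : Fin n → ℝ, (∑ i, γ i * Ytil i = 0) →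
      ∑ i, γ i * f i = ∑ i, γ i - (∑ i, (γ i * Ytil i) • m i) ⬝ᵥ vstar := by
    intro γ hγY
    have e1 : (∑ i, (γ i * Ytil i) • m i) ⬝ᵥ vstar
        = ∑ i, (γ i * Ytil i) * (m i ⬝ᵥ vstar) := sum_smul_dot _ _ _
    have e2 : ∑ i, γ i * f i
        = ∑ i, (γ i - (γ i * Ytil i) * (m i ⬝ᵥ vstar) + (γ i * Ytil i) * tstar) := by
      refine Finset.sum_congr rfl fun i _ => ?_
      simp only [hfdef]; ring
    rw [e2, e1, Finset.sum_add_distrib, Finset.sum_sub_distrib, ← Finset.sum_mul, hγY,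
      zero_mul, add_zero]
  -- weak duality
  have hweak : ∀ γ : Fin n → ℝ, (∀ i, 0 ≤ γ i ∧ γ i ≤ lam / n) → (∑ i, γ i * Ytil i = 0) →
      -(dualObjV Sr Sc X Ytil u γ)
        ≤ Q * (vstar ⬝ᵥ Sc.mulVec vstar) + (lam / n) * ∑ i, max (f i) 0 := by
    intro γ hγ hγY
    have h1 : ∑ i, γ i * f i ≤ (lam / n) * ∑ i, max (f i) 0 := by
      rw [Finset.mul_sum]
      refine Finset.sum_le_sum fun i _ => ?_
      have h := hγ i
      rcases le_or_gt (f i) 0 with hfi | hfi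
      · rw [max_eq_right hfi, mul_zero]
        exact mul_nonpos_of_nonneg_of_nonpos h.1 hfi
      · rw [max_eq_left hfi.le]
        exact mul_le_mul_of_nonneg_right h.2 hfi.le
    have h2 := hsumf γ hγY
    have h3 := key_quad hSc hQ vstar (∑ i, (γ i * Ytil i) • m i)
    rw [hD γ]
    linarith
  -- complementary slackness and equality of values
  have hcs : ∀ i, (lam / n) * max (f i) 0 = β i * f i := by
    intro i
    rcases lt_trichotomy (f i) 0 with hfi | hfi | hfi
    · rw [max_eq_right hfi.le, hβneg i hfi, mul_zero, zero_mul]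
    · rw [hfi, mul_zero, max_self, mul_zero]
    · rw [max_eq_left hfi.le, hβpos i hfi]
  have hβeq : dualObjV Sr Sc X Ytil u β
      = -(Q * (vstar ⬝ᵥ Sc.mulVec vstar) + (lam / n) * ∑ i, max (f i) 0) := by
    rw [hD β]
    have h2 : (∑ i, (β i * Ytil i) • m i) ⬝ᵥ Sc⁻¹.mulVec (∑ i, (β i * Ytil i) • m i)
        = 4 * Q ^ 2 * (vstar ⬝ᵥ Sc.mulVec vstar) := by
      rw [hβstat, smul_dotProduct, mulVec_smul, dotProduct_smul, hinv]
      have hco : Sc.mulVec vstar ⬝ᵥ vstar = vstar ⬝ᵥ Sc.mulVec vstar := dotProduct_comm _ _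
      simp only [smul_eq_mul, hco]
      ring
    have h3 : (lam / n) * ∑ i, max (f i) 0 = ∑ i, β i * f i := by
      rw [Finset.mul_sum]; exact Finset.sum_congr rfl fun i _ => hcs i
    have h4 := hsumf β hβY
    have h5 : (∑ i, (β i * Ytil i) • m i) ⬝ᵥ vstar = 2 * Q * (vstar ⬝ᵥ Sc.mulVec vstar) := by
      rw [hβstat, smul_dotProduct]
      have hco : Sc.mulVec vstar ⬝ᵥ vstar = vstar ⬝ᵥ Sc.mulVec vstar := dotProduct_comm _ _
      simp only [smul_eq_mul, hco]
    have h6 : (4 * Q)⁻¹ * (4 * Q ^ 2 * (vstar ⬝ᵥ Sc.mulVec vstar))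
        = Q * (vstar ⬝ᵥ Sc.mulVec vstar) := by field_simp
    rw [h2, h6, h3, h4, h5]
    ring
  refine ⟨β, hβ01, hβY, hrep, ?_⟩
  intro γ hγ hγY
  have := hweak γ hγ hγY
  rw [hβeq] at *
  linarith
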